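/- Let X and Y be pre-ordered Banach spaces with closed cones, and α > 0. If X₊ is generating in X and Y is α-normal, then there exists γ > 0 such that B(X,Y) is γ-normal: for all bounded linear operators T, S : X → Y, if 0 ≤ T ≤ S in the operator order then ‖T‖ ≤ γ‖S‖. -/

import Mathlib

open Filter Topology

private lemma aux_decomp {X : Type*} [NormedAddCommGroup X] [NormedSpace ℝ X]
    [CompleteSpace X] (C : Set X) (hclosed : IsClosed C)
    (hadd : ∀ x ∈ C, ∀ y ∈ C, x + y ∈ C)
    (hsmul : ∀ (t : ℝ), 0 ≤ t → ∀ x ∈ C, t • x ∈ C)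
    (hgen : ∀ x : X, ∃ a ∈ C, ∃ b ∈ C, x = a - b) :
    ∃ M : ℝ, 0 < M ∧ ∀ x : X, ∃ a ∈ C, ∃ b ∈ C,
      x = a - b ∧ ‖a‖ ≤ M * ‖x‖ ∧ ‖b‖ ≤ M * ‖x‖ := by
  classical
  have hC0 : (0 : X) ∈ C := by
    obtain ⟨a, ha, -⟩ := hgen 0
    simpa using hsmul 0 le_rfl a ha
  set E : ℝ → Set X := fun c => {x | ∃ a ∈ C, ∃ b ∈ C, x = a - b ∧ ‖a‖ ≤ c ∧ ‖b‖ ≤ c}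
    with hE
  -- Baire category: some closure (E (n+1)) has nonempty interior
  have hcover : (⋃ n : ℕ, closure (E (n + 1))) = Set.univ := by
    ext x
    simp only [Set.mem_iUnion, Set.mem_univ, iff_true]
    obtain ⟨a, ha, b, hb, hx⟩ := hgen x
    refine ⟨⌈max ‖a‖ ‖b‖⌉₊, subset_closure ⟨a, ha, b, hb, hx, ?_, ?_⟩⟩
    · exact le_trans (le_trans (le_max_left _ _) (Nat.le_ceil _)) (by linarith)
    · exact le_trans (le_trans (le_max_right _ _) (Nat.le_ceil _)) (by linarith)
  obtain ⟨n, x₀, hx₀⟩ :=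
    nonempty_interior_of_iUnion_of_closed (fun n : ℕ => isClosed_closure) hcover
  obtain ⟨ε, hε, hball⟩ := Metric.mem_nhds_iff.mp (mem_interior_iff_mem_nhds.mp hx₀)
  -- translate to a ball around 0 (cost: a factor 2 in the bound)
  have hball0 : ∀ x : X, ‖x‖ < ε → x ∈ closure (E (2 * ((n : ℝ) + 1))) := by
    intro x hx
    rw [Metric.mem_closure_iff]
    intro δ hδ
    have h1 : x₀ + x ∈ closure (E ((n : ℝ) + 1)) := by
      apply hball
      simp only [Metric.mem_ball, dist_eq_norm]
      simpa using hx
    have h2 : x₀ ∈ closure (E ((n : ℝ) + 1)) := hball (Metric.mem_ball_self hε)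
    obtain ⟨p, hp, hdp⟩ := Metric.mem_closure_iff.mp h1 (δ / 2) (by linarith)
    obtain ⟨q, hq, hdq⟩ := Metric.mem_closure_iff.mp h2 (δ / 2) (by linarith)
    obtain ⟨a₁, ha₁, b₁, hb₁, hp', hpa, hpb⟩ := hp
    obtain ⟨a₂, ha₂, b₂, hb₂, hq', hqa, hqb⟩ := hq
    refine ⟨p - q, ⟨a₁ + b₂, hadd _ ha₁ _ hb₂, b₁ + a₂, hadd _ hb₁ _ ha₂,
      by rw [hp', hq']; abel, ?_, ?_⟩, ?_⟩
    · calc ‖a₁ + b₂‖ ≤ ‖a₁‖ + ‖b₂‖ := norm_add_le _ _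
        _ ≤ 2 * ((n : ℝ) + 1) := by linarith
    · calc ‖b₁ + a₂‖ ≤ ‖b₁‖ + ‖a₂‖ := norm_add_le _ _
        _ ≤ 2 * ((n : ℝ) + 1) := by linarith
    · have : x - (p - q) = (x₀ + x - p) - (x₀ - q) := by abel
      rw [dist_eq_norm, this]
      calc ‖(x₀ + x - p) - (x₀ - q)‖ ≤ ‖x₀ + x - p‖ + ‖x₀ - q‖ := norm_sub_le _ _
        _ < δ / 2 + δ / 2 := by
            rw [dist_eq_norm] at hdp hdq; exact add_lt_add hdp hdq
        _ = δ := by ring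
  -- the approximation constant
  set M₀ : ℝ := 4 * ((n : ℝ) + 1) / ε with hM₀def
  have hM₀ : 0 < M₀ := by positivity
  -- one-step approximate decomposition
  have step : ∀ u : X, ∃ a ∈ C, ∃ b ∈ C,
      ‖a‖ ≤ M₀ * ‖u‖ ∧ ‖b‖ ≤ M₀ * ‖u‖ ∧ ‖u - (a - b)‖ ≤ ‖u‖ / 2 := by
    intro u
    rcases eq_or_ne u 0 with rfl | hu
    · exact ⟨0, hC0, 0, hC0, by simp, by simp, by simp⟩
    have hnu : (0 : ℝ) < ‖u‖ := norm_pos_iff.mpr hu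
    set s : ℝ := ε / (2 * ‖u‖) with hsdef
    have hs : 0 < s := by positivity
    have hsu : ‖s • u‖ < ε := by
      rw [norm_smul, Real.norm_of_nonneg hs.le, hsdef]
      rw [div_mul_eq_mul_div, mul_comm]
      rw [div_lt_iff₀ (by positivity)]
      nlinarith
    obtain ⟨y, hy, hdy⟩ := Metric.mem_closure_iff.mp (hball0 _ hsu) (s * (‖u‖ / 2))
      (by positivity)
    obtain ⟨a', ha', b', hb', hy', hya, hyb⟩ := hy
    have hsinv : (0:ℝ) ≤ s⁻¹ := (inv_pos.mpr hs).le
    refine ⟨s⁻¹ • a', hsmul _ hsinv _ ha', s⁻¹ • b', hsmul _ hsinv _ hb', ?_, ?_, ?_⟩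
    · rw [norm_smul, Real.norm_of_nonneg hsinv]
      have h2 : s⁻¹ = 2 * ‖u‖ / ε := by rw [hsdef]; field_simp
      calc s⁻¹ * ‖a'‖ ≤ s⁻¹ * (2 * ((n : ℝ) + 1)) := mul_le_mul_of_nonneg_left hya hsinv
        _ = M₀ * ‖u‖ := by rw [h2, hM₀def]; field_simp; ring
    · rw [norm_smul, Real.norm_of_nonneg hsinv]
      have h2 : s⁻¹ = 2 * ‖u‖ / ε := by rw [hsdef]; field_simp
      calc s⁻¹ * ‖b'‖ ≤ s⁻¹ * (2 * ((n : ℝ) + 1)) := mul_le_mul_of_nonneg_left hyb hsinv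
        _ = M₀ * ‖u‖ := by rw [h2, hM₀def]; field_simp; ring
    · have : u - (s⁻¹ • a' - s⁻¹ • b') = s⁻¹ • (s • u - (a' - b')) := by
        rw [smul_sub, smul_smul, inv_mul_cancel₀ hs.ne', one_smul, smul_sub]
      rw [this, ← hy', norm_smul, Real.norm_of_nonneg hsinv]
      rw [dist_eq_norm] at hdy
      calc s⁻¹ * ‖s • u - y‖ ≤ s⁻¹ * (s * (‖u‖ / 2)) := by
            exact mul_le_mul_of_nonneg_left hdy.le hsinv
        _ = ‖u‖ / 2 := by field_simp
  -- iterate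
  choose A hA B hB hAn hBn hrem using step
  refine ⟨2 * M₀, by positivity, fun x => ?_⟩
  set F : X → X := fun u => u - (A u - B u) with hF
  set rem : ℕ → X := fun k => F^[k] x with hremdef
  have hrems : ∀ k, rem (k + 1) = rem k - (A (rem k) - B (rem k)) := by
    intro k
    simp only [hremdef, Function.iterate_succ_apply']
    rfl
  have hremn : ∀ k, ‖rem k‖ ≤ ‖x‖ * (1 / 2) ^ k := by
    intro k
    induction k with
    | zero => simp [hremdef]
    | succ k ih =>
      rw [hrems k]
      calc ‖rem k - (A (rem k) - B (rem k))‖ ≤ ‖rem k‖ / 2 := hrem _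
        _ ≤ (‖x‖ * (1 / 2) ^ k) / 2 := by linarith
        _ = ‖x‖ * (1 / 2) ^ (k + 1) := by ring
  have hAk : ∀ k, ‖A (rem k)‖ ≤ M₀ * ‖x‖ * (1 / 2) ^ k := by
    intro k
    calc ‖A (rem k)‖ ≤ M₀ * ‖rem k‖ := hAn _
      _ ≤ M₀ * (‖x‖ * (1 / 2) ^ k) := mul_le_mul_of_nonneg_left (hremn k) hM₀.le
      _ = M₀ * ‖x‖ * (1 / 2) ^ k := by ring
  have hBk : ∀ k, ‖B (rem k)‖ ≤ M₀ * ‖x‖ * (1 / 2) ^ k := by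
    intro k
    calc ‖B (rem k)‖ ≤ M₀ * ‖rem k‖ := hBn _
      _ ≤ M₀ * (‖x‖ * (1 / 2) ^ k) := mul_le_mul_of_nonneg_left (hremn k) hM₀.le
      _ = M₀ * ‖x‖ * (1 / 2) ^ k := by ring
  have hgeo : HasSum (fun k : ℕ => M₀ * ‖x‖ * (1 / 2) ^ k) (M₀ * ‖x‖ * 2) :=
    hasSum_geometric_two.mul_left _
  have hsumA : Summable fun k => A (rem k) :=
    Summable.of_norm_bounded hgeo.summable hAk
  have hsumB : Summable fun k => B (rem k) :=
    Summable.of_norm_bounded hgeo.summable hBk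
  set a : X := ∑' k, A (rem k) with hadef
  set b : X := ∑' k, B (rem k) with hbdef
  have hpsA : ∀ m, ∑ k ∈ Finset.range m, A (rem k) ∈ C := by
    intro m
    induction m with
    | zero => simpa using hC0
    | succ m ih => rw [Finset.sum_range_succ]; exact hadd _ ih _ (hA _)
  have hpsB : ∀ m, ∑ k ∈ Finset.range m, B (rem k) ∈ C := by
    intro m
    induction m with
    | zero => simpa using hC0
    | succ m ih => rw [Finset.sum_range_succ]; exact hadd _ ih _ (hB _)
  have haC : a ∈ C :=
    hclosed.mem_of_tendsto hsumA.hasSum.tendsto_sum_nat (Eventually.of_forall hpsA)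
  have hbC : b ∈ C :=
    hclosed.mem_of_tendsto hsumB.hasSum.tendsto_sum_nat (Eventually.of_forall hpsB)
  have hna : ‖a‖ ≤ 2 * M₀ * ‖x‖ := by
    have := tsum_of_norm_bounded hgeo hAk
    rw [← hadef] at this
    linarith [this]
  have hnb : ‖b‖ ≤ 2 * M₀ * ‖x‖ := by
    have := tsum_of_norm_bounded hgeo hBk
    rw [← hbdef] at this
    linarith [this]
  have htel : ∀ m, ∑ k ∈ Finset.range m, (A (rem k) - B (rem k)) = x - rem m := by
    intro m
    induction m with
    | zero => simp [hremdef]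
    | succ m ih => rw [Finset.sum_range_succ, ih, hrems m]; abel
  have hrem0 : Tendsto rem atTop (𝓝 0) := by
    have h1 : Tendsto (fun k : ℕ => ‖x‖ * (1 / 2) ^ k) atTop (𝓝 0) := by
      have := tendsto_pow_atTop_nhds_zero_of_lt_one (by norm_num : (0:ℝ) ≤ 1/2)
        (by norm_num : (1/2 : ℝ) < 1)
      simpa using this.const_mul ‖x‖
    exact squeeze_zero_norm hremn h1
  have hx_ab : x = a - b := by
    have h1 : Tendsto (fun m => ∑ k ∈ Finset.range m, (A (rem k) - B (rem k)))
        atTop (𝓝 (a - b)) :=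
      (hsumA.hasSum.sub hsumB.hasSum).tendsto_sum_nat
    have h2 : Tendsto (fun m => ∑ k ∈ Finset.range m, (A (rem k) - B (rem k)))
        atTop (𝓝 x) := by
      simp only [htel]
      simpa using (tendsto_const_nhds (x := x)).sub hrem0
    exact (tendsto_nhds_unique h2 h1)
  exact ⟨a, haC, b, hbC, hx_ab, hna, hnb⟩

theorem stmt6
    {X : Type*} [NormedAddCommGroup X] [NormedSpace ℝ X] [CompleteSpace X]
    {Y : Type*} [NormedAddCommGroup Y] [NormedSpace ℝ Y] [CompleteSpace Y]
    (Xpos : Set X) (hXpos_closed : IsClosed Xpos)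
    (hXpos_add : ∀ x ∈ Xpos, ∀ y ∈ Xpos, x + y ∈ Xpos)
    (hXpos_smul : ∀ (t : ℝ), 0 ≤ t → ∀ x ∈ Xpos, t • x ∈ Xpos)
    (Ypos : Set Y) (hYpos_closed : IsClosed Ypos)
    (hYpos_add : ∀ x ∈ Ypos, ∀ y ∈ Ypos, x + y ∈ Ypos)
    (hYpos_smul : ∀ (t : ℝ), 0 ≤ t → ∀ x ∈ Ypos, t • x ∈ Ypos)
    (α : ℝ) (hα : 0 < α)
    (hXgen : ∀ x : X, ∃ a ∈ Xpos, ∃ b ∈ Xpos, x = a - b)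
    (hYnormal : ∀ x y : Y, x ∈ Ypos → y - x ∈ Ypos → ‖x‖ ≤ α * ‖y‖) :
    ∃ (γ : ℝ), 0 < γ ∧
      ∀ T S : X →L[ℝ] Y,
        (∀ x ∈ Xpos, T x ∈ Ypos) →
        (∀ x ∈ Xpos, S x - T x ∈ Ypos) →
        ‖T‖ ≤ γ * ‖S‖ := by
  obtain ⟨M, hM, hdec⟩ := aux_decomp Xpos hXpos_closed hXpos_add hXpos_smul hXgen
  refine ⟨2 * α * M, by positivity, fun T S hT hTS => ?_⟩
  have hS : (0:ℝ) ≤ ‖S‖ := norm_nonneg _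
  refine T.opNorm_le_bound (by positivity) (fun x => ?_)
  obtain ⟨a, ha, b, hb, hx, hna, hnb⟩ := hdec x
  have hTa : ‖T a‖ ≤ α * ‖S a‖ := hYnormal _ _ (hT a ha) (hTS a ha)
  have hTb : ‖T b‖ ≤ α * ‖S b‖ := hYnormal _ _ (hT b hb) (hTS b hb)
  have hSa : ‖S a‖ ≤ ‖S‖ * ‖a‖ := S.le_opNorm a
  have hSb : ‖S b‖ ≤ ‖S‖ * ‖b‖ := S.le_opNorm b
  have h1 : ‖T x‖ ≤ ‖T a‖ + ‖T b‖ := by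
    rw [hx, map_sub]; exact norm_sub_le _ _
  have hna' : ‖S‖ * ‖a‖ ≤ ‖S‖ * (M * ‖x‖) := by
    exact mul_le_mul_of_nonneg_left hna hS
  have hnb' : ‖S‖ * ‖b‖ ≤ ‖S‖ * (M * ‖x‖) := by
    exact mul_le_mul_of_nonneg_left hnb hS
  nlinarith [norm_nonneg (T a), norm_nonneg (T b), norm_nonneg (S a), norm_nonneg (S b)]
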